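/- Let b, k > 0, λ_p, λ_c < 0, and c₁, c₂ > 0. Define V : ℝ² → ℝ by V(x_p, x_c) = c₁·x_p·arctan(x_p) + c₂·x_c·arctan(x_c), and define f : ℝ² × ℝ → ℝ² by f((x_p,x_c), w) = (λ_p·arctan(x_p) + b·arctan(x_c) + w, λ_c·arctan(x_c) + k·arctan(x_p)). Then for all (x_p, x_c) ∈ ℝ² and all w ∈ ℝ, ⟨∇V(x_p,x_c), f((x_p,x_c), w)⟩ ≤ (c₁λ_p + b c₁ + k c₂)·(arctan x_p)² + (c₂λ_c + k c₂ + b c₁)·(arctan x_c)² + (c₁(π+1)/2)·|w|. -/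

import Mathlib

/-- The candidate iISS Lyapunov function `V(x_p, x_c) = c₁ x_p arctan x_p + c₂ x_c arctan x_c`
for the reset control system. -/
noncomputable def Vres (c1 c2 : ℝ) (x : EuclideanSpace ℝ (Fin 2)) : ℝ :=
  c1 * x 0 * Real.arctan (x 0) + c2 * x 1 * Real.arctan (x 1)

/-- The flow map of the reset control system. -/
noncomputable def fres (b k lp lc : ℝ) (xp xc w : ℝ) : EuclideanSpace ℝ (Fin 2) :=
  WithLp.toLp 2 ![lp * Real.arctan xp + b * Real.arctan xc + w,
    lc * Real.arctan xc + k * Real.arctan xp]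

open Real InnerProductSpace

lemma hasDeriv_aux (c t : ℝ) :
    HasDerivAt (fun s => c * s * Real.arctan s) (c * (Real.arctan t + t / (1 + t ^ 2))) t := by
  have h := ((hasDerivAt_id t).const_mul c).mul (Real.hasDerivAt_arctan t)
  refine h.congr_deriv ?_
  simp only [id]
  ring

lemma gradVres (c1 c2 xp xc : ℝ) :
    HasGradientAt (Vres c1 c2)
      (WithLp.toLp 2 ![c1 * (Real.arctan xp + xp / (1 + xp ^ 2)),
         c2 * (Real.arctan xc + xc / (1 + xc ^ 2))] : EuclideanSpace ℝ (Fin 2))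
      (WithLp.toLp 2 ![xp, xc] : EuclideanSpace ℝ (Fin 2)) := by
  rw [hasGradientAt_iff_hasFDerivAt]
  have h0 : HasFDerivAt (fun x : EuclideanSpace ℝ (Fin 2) => c1 * x 0 * Real.arctan (x 0))
      ((c1 * (Real.arctan xp + xp / (1 + xp ^ 2))) • (EuclideanSpace.proj (0 : Fin 2) : EuclideanSpace ℝ (Fin 2) →L[ℝ] ℝ))
      (WithLp.toLp 2 ![xp, xc] : EuclideanSpace ℝ (Fin 2)) := by
    exact (hasDeriv_aux c1 xp).comp_hasFDerivAt (WithLp.toLp 2 ![xp, xc] : EuclideanSpace ℝ (Fin 2))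
      ((EuclideanSpace.proj (0 : Fin 2) : EuclideanSpace ℝ (Fin 2) →L[ℝ] ℝ).hasFDerivAt)
  have h1 : HasFDerivAt (fun x : EuclideanSpace ℝ (Fin 2) => c2 * x 1 * Real.arctan (x 1))
      ((c2 * (Real.arctan xc + xc / (1 + xc ^ 2))) • (EuclideanSpace.proj (1 : Fin 2) : EuclideanSpace ℝ (Fin 2) →L[ℝ] ℝ))
      (WithLp.toLp 2 ![xp, xc] : EuclideanSpace ℝ (Fin 2)) := by
    exact (hasDeriv_aux c2 xc).comp_hasFDerivAt (WithLp.toLp 2 ![xp, xc] : EuclideanSpace ℝ (Fin 2))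
      ((EuclideanSpace.proj (1 : Fin 2) : EuclideanSpace ℝ (Fin 2) →L[ℝ] ℝ).hasFDerivAt)
  have h := h0.add h1
  refine h.congr_fderiv ?_
  apply ContinuousLinearMap.ext
  intro y
  simp [InnerProductSpace.toDual_apply_apply, PiLp.inner_apply, Fin.sum_univ_two,
    PiLp.proj_apply, RCLike.inner_apply]
  ring

lemma arctan_abs_le (s : ℝ) : |Real.arctan s| ≤ Real.pi / 2 :=
  abs_le.mpr ⟨(Real.neg_pi_div_two_lt_arctan s).le, (Real.arctan_lt_pi_div_two s).le⟩

lemma frac_abs_le (s : ℝ) : |s / (1 + s ^ 2)| ≤ 1 / 2 := by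
  rw [abs_div, abs_of_pos (by positivity : (0:ℝ) < 1 + s ^ 2)]
  rw [div_le_div_iff₀ (by positivity) (by norm_num)]
  nlinarith [sq_nonneg (|s| - 1), sq_abs s]

lemma arctan_sign (s : ℝ) : 0 ≤ s * Real.arctan s := by
  rcases le_or_gt 0 s with h | h
  · exact mul_nonneg h (by simpa using Real.arctan_strictMono.monotone h)
  · have h1 : Real.arctan s ≤ 0 := by simpa using Real.arctan_strictMono.monotone h.le
    nlinarith

lemma frac_le_arctan {s : ℝ} (hs : 0 ≤ s) : s / (1 + s ^ 2) ≤ Real.arctan s := by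
  have ht : (0:ℝ) < Real.sqrt (1 + s ^ 2) := Real.sqrt_pos.mpr (by positivity)
  set t := Real.sqrt (1 + s ^ 2) with htdef
  have ht2 : t ^ 2 = 1 + s ^ 2 := Real.sq_sqrt (by positivity)
  have h1 : t ≤ 1 + s ^ 2 := by
    have : t ≤ Real.sqrt ((1 + s ^ 2) ^ 2) := Real.sqrt_le_sqrt (by nlinarith)
    rwa [Real.sqrt_sq (by positivity)] at this
  have hst : s / t ≤ 1 := by
    rw [div_le_one ht]
    nlinarith [Real.sqrt_nonneg (1 + s ^ 2)]
  have hstn : 0 ≤ s / t := div_nonneg hs ht.le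
  have harc : s / t ≤ Real.arcsin (s / t) := by
    rw [Real.le_arcsin_iff_sin_le ⟨by linarith [Real.pi_pos], by
        linarith [Real.pi_gt_three]⟩ ⟨by linarith, hst⟩]
    rcases eq_or_lt_of_le hstn with h | h
    · simp [← h]
    · exact (Real.sin_lt h).le
  calc s / (1 + s ^ 2) ≤ s / t := by
        apply div_le_div_of_nonneg_left hs ht h1
      _ ≤ Real.arcsin (s / t) := harc
      _ = Real.arctan s := by
        rw [Real.arctan_eq_arcsin]

lemma frac_sq_le (s : ℝ) : (s / (1 + s ^ 2)) ^ 2 ≤ (Real.arctan s) ^ 2 := by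
  rcases le_or_gt 0 s with h | h
  · have := frac_le_arctan h
    have h2 : 0 ≤ s / (1 + s ^ 2) := div_nonneg h (by positivity)
    nlinarith
  · have h' : (0:ℝ) ≤ -s := by linarith
    have := frac_le_arctan h'
    rw [Real.arctan_neg] at this
    have h2 : 0 ≤ (-s) / (1 + (-s) ^ 2) := div_nonneg h' (by positivity)
    have e : (-s) / (1 + (-s) ^ 2) = -(s / (1 + s ^ 2)) := by ring
    rw [e] at this h2
    nlinarith

/-- The flow estimate (eq. (22) of the paper): for all states and disturbances,
`⟨∇V(x), f(x,w)⟩ ≤ (c₁λ_p + bc₁ + kc₂)(arctan x_p)² + (c₂λ_c + kc₂ + bc₁)(arctan x_c)²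
 + (c₁(π+1)/2)|w|`. -/
theorem reset_flow_estimate (b k lp lc c1 c2 : ℝ)
    (hb : 0 < b) (hk : 0 < k) (hlp : lp < 0) (hlc : lc < 0)
    (hc1 : 0 < c1) (hc2 : 0 < c2) :
    ∀ xp xc w : ℝ,
      inner (𝕜 := ℝ) (gradient (Vres c1 c2) (WithLp.toLp 2 ![xp, xc] : EuclideanSpace ℝ (Fin 2)))
          (fres b k lp lc xp xc w)
        ≤ (c1 * lp + b * c1 + k * c2) * (Real.arctan xp) ^ 2
          + (c2 * lc + k * c2 + b * c1) * (Real.arctan xc) ^ 2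
          + (c1 * (Real.pi + 1) / 2) * |w| := by
  intro xp xc w
  rw [(gradVres c1 c2 xp xc).gradient]
  simp only [fres, PiLp.inner_apply, Fin.sum_univ_two, RCLike.inner_apply, starRingEnd_apply,
    star_trivial, Matrix.cons_val_zero, Matrix.cons_val_one, Matrix.head_cons]
  set a := Real.arctan xp with ha
  set u := Real.arctan xc with hu
  set A := xp / (1 + xp ^ 2) with hA
  set U := xc / (1 + xc ^ 2) with hU
  have hAa : 0 ≤ A * a := by
    have h := arctan_sign xp
    rw [hA, ha]
    have hp : (0:ℝ) < 1 + xp ^ 2 := by positivity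
    rw [div_mul_eq_mul_div]
    positivity
  have hUu : 0 ≤ U * u := by
    have h := arctan_sign xc
    rw [hU, hu]
    have hp : (0:ℝ) < 1 + xc ^ 2 := by positivity
    rw [div_mul_eq_mul_div]
    positivity
  have hA2 : A ^ 2 ≤ a ^ 2 := frac_sq_le xp
  have hU2 : U ^ 2 ≤ u ^ 2 := frac_sq_le xc
  have h1 : c1 * lp * (A * a) ≤ 0 := by nlinarith [mul_nonneg hAa (mul_pos hc1 (neg_pos.2 hlp)).le]
  have h2 : c2 * lc * (U * u) ≤ 0 := by nlinarith [mul_nonneg hUu (mul_pos hc2 (neg_pos.2 hlc)).le]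
  have h3 : c1 * b * (a * u + A * u) ≤ c1 * b * (a ^ 2 + u ^ 2) := by
    apply mul_le_mul_of_nonneg_left _ (mul_pos hc1 hb).le
    nlinarith [sq_nonneg (a - u), sq_nonneg (A - u)]
  have h4 : c2 * k * (u * a + U * a) ≤ c2 * k * (a ^ 2 + u ^ 2) := by
    apply mul_le_mul_of_nonneg_left _ (mul_pos hc2 hk).le
    nlinarith [sq_nonneg (a - u), sq_nonneg (U - a)]
  have h5 : c1 * ((a + A) * w) ≤ c1 * ((Real.pi + 1) / 2 * |w|) := by
    apply mul_le_mul_of_nonneg_left _ hc1.le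
    have e1 : a * w ≤ |a| * |w| := by rw [← abs_mul]; exact le_abs_self _
    have e2 : A * w ≤ |A| * |w| := by rw [← abs_mul]; exact le_abs_self _
    have e3 : |a| * |w| ≤ Real.pi / 2 * |w| :=
      mul_le_mul_of_nonneg_right (arctan_abs_le xp) (abs_nonneg w)
    have e4 : |A| * |w| ≤ 1 / 2 * |w| :=
      mul_le_mul_of_nonneg_right (frac_abs_le xp) (abs_nonneg w)
    nlinarith
  nlinarith [h1, h2, h3, h4, h5]
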